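/- Let K be a perfect field with algebraic closure K̄ and let α, β ∈ K̄ be such that K(α) = K(β). Then for every extension M of K contained in K̄, the number of roots of the minimal polynomial of α over K that lie in M equals the number of roots of the minimal polynomial of β over K that lie in M. -/

import Mathlib

/-- The root capacity `ρ_K(M, α)`: the number of roots, lying in `M`, of the minimal
polynomial of `α` over `K`. -/
noncomputable def rootCapacity (K : Type*) [Field K]
    (M : IntermediateField K (AlgebraicClosure K)) (α : AlgebraicClosure K) : ℕ :=
  {x ∈ (minpoly K α).rootSet (AlgebraicClosure K) | x ∈ M}.ncard

open IntermediateField Polynomial in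
theorem rootCapacity_le (K : Type*) [Field K] (α β : AlgebraicClosure K)
    (h : IntermediateField.adjoin K {α} = IntermediateField.adjoin K {β})
    (M : IntermediateField K (AlgebraicClosure K)) :
    rootCapacity K M α ≤ rootCapacity K M β := by
  classical
  unfold rootCapacity
  have halgβ : IsAlgebraic K β := Algebra.IsAlgebraic.isAlgebraic β
  have halgα : IsAlgebraic K α := Algebra.IsAlgebraic.isAlgebraic α
  have key : ∀ x ∈ (minpoly K α).rootSet (AlgebraicClosure K),
      ∃ σ : AlgebraicClosure K ≃ₐ[K] AlgebraicClosure K, σ α = x := by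
    intro x hx
    obtain ⟨σ, hσ⟩ := minpoly.exists_algEquiv_of_root (K := K) (L := AlgebraicClosure K) halgα
      ((mem_rootSet.mp hx).2)
    exact ⟨σ.symm, by rw [← hσ, AlgEquiv.symm_apply_apply]⟩
  set f : AlgebraicClosure K → AlgebraicClosure K := fun x =>
    if hx : x ∈ (minpoly K α).rootSet (AlgebraicClosure K) then (key x hx).choose β else x
    with hf
  have hβmem : β ∈ adjoin K {α} := by rw [h]; exact mem_adjoin_simple_self K β
  have hTfin : {x ∈ (minpoly K β).rootSet (AlgebraicClosure K) | x ∈ M}.Finite :=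
    (Polynomial.rootSet_finite _ _).subset (fun x hx => hx.1)
  have hmapsto : ∀ x ∈ {x ∈ (minpoly K α).rootSet (AlgebraicClosure K) | x ∈ M},
      f x ∈ {x ∈ (minpoly K β).rootSet (AlgebraicClosure K) | x ∈ M} := by
    rintro x ⟨hx, hxM⟩
    obtain hσ := (key x hx).choose_spec
    set σ := (key x hx).choose
    have hfx : f x = σ β := by simp [hf, hx]; rfl
    constructor
    · rw [hfx, mem_rootSet]
      refine ⟨minpoly.ne_zero halgβ.isIntegral, ?_⟩
      have := Polynomial.aeval_algHom_apply σ.toAlgHom β (minpoly K β)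
      change aeval (σ β) (minpoly K β) = σ (aeval β (minpoly K β)) at this
      rw [this, minpoly.aeval, map_zero]
    · have h1 : σ β ∈ (adjoin K {α}).map σ.toAlgHom := ⟨β, hβmem, rfl⟩
      rw [adjoin_map] at h1
      have h2 : (σ.toAlgHom '' {α} : Set (AlgebraicClosure K)) = {x} := by
        simp [hσ]
      rw [h2] at h1
      have h3 : adjoin K {x} ≤ M := adjoin_le_iff.mpr (by simpa using hxM)
      exact hfx ▸ h3 h1
  have hinj : Set.InjOn f {x ∈ (minpoly K α).rootSet (AlgebraicClosure K) | x ∈ M} := by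
    rintro x ⟨hx, _⟩ y ⟨hy, _⟩ hxy
    obtain hσ := (key x hx).choose_spec
    obtain hτ := (key y hy).choose_spec
    set σ := (key x hx).choose
    set τ := (key y hy).choose
    have hfx : f x = σ β := by simp [hf, hx]; rfl
    have hfy : f y = τ β := by simp [hf, hy]; rfl
    rw [hfx, hfy] at hxy
    set ρ : AlgebraicClosure K ≃ₐ[K] AlgebraicClosure K := σ.trans τ.symm with hρ
    have hρβ : ρ β = β := by
      simp [hρ, AlgEquiv.trans_apply, hxy]
    have hαmem : α ∈ Algebra.adjoin K ({β} : Set (AlgebraicClosure K)) := by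
      have h4 : α ∈ adjoin K {β} := by rw [← h]; exact mem_adjoin_simple_self K α
      rw [← adjoin_simple_toSubalgebra_of_isAlgebraic halgβ]
      exact h4
    have hfix : Algebra.adjoin K ({β} : Set (AlgebraicClosure K)) ≤
        AlgHom.equalizer ρ.toAlgHom (AlgHom.id K (AlgebraicClosure K)) := by
      apply Algebra.adjoin_le
      intro z hz
      rw [Set.mem_singleton_iff] at hz
      subst hz
      exact hρβ
    have hρα : ρ α = α := hfix hαmem
    have hts : τ.symm (σ α) = α := hρα
    calc x = σ α := hσ.symm
      _ = τ (τ.symm (σ α)) := (τ.apply_symm_apply _).symm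
      _ = τ α := by rw [hts]
      _ = y := hτ
  exact Set.ncard_le_ncard_of_injOn f hmapsto hinj hTfin

/-- Let `K` be a perfect field with algebraic closure `K̄` and `α, β ∈ K̄` with
`K(α) = K(β)`. Then for every extension `M` of `K` inside `K̄`, the number of roots of the
minimal polynomial of `α` over `K` lying in `M` equals the number of roots of the minimal
polynomial of `β` over `K` lying in `M`. -/
theorem stmt_12 (K : Type*) [Field K] [PerfectField K] (α β : AlgebraicClosure K)
    (h : IntermediateField.adjoin K {α} = IntermediateField.adjoin K {β})
    (M : IntermediateField K (AlgebraicClosure K)) :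
    rootCapacity K M α = rootCapacity K M β := by
  exact le_antisymm (rootCapacity_le K α β h M) (rootCapacity_le K β α h.symm M)
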